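/- Let H be a real Hilbert space with a Hilbert (orthonormal) basis (φ_k)_{k∈ℕ}, let T > 0 and 0 < α < 1, and let λ : ℕ → ℝ be a sequence of positive reals. If g₁, g₂ ∈ H satisfy Σ_{k=0}^∞ ⟨g₁, φ_k⟩ E_{α,1}(−λ_k T^α) φ_k = Σ_{k=0}^∞ ⟨g₂, φ_k⟩ E_{α,1}(−λ_k T^α) φ_k (equality in H of the convergent series), then g₁ = g₂. -/

import Mathlib

open scoped RealInnerProductSpace
open Real Filter MeasureTheory intervalIntegral Set

/-- The real Mittag-Leffler function `E_{α,β}(x) = ∑ xᵏ / Γ(αk + β)`. -/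
noncomputable def mittagLefflerReal (α β x : ℝ) : ℝ :=
  ∑' k : ℕ, x ^ k / Real.Gamma (α * k + β)

set_option linter.unusedSectionVars false
set_option linter.unusedVariables false


lemma Gamma_add_one_le_aux {α : ℝ} (hα0 : 0 < α) (hα1 : α < 1) {s : ℝ} (hs : 0 < s) :
    Real.Gamma (s + 1) ≤ Real.Gamma (s + α) * (s + α) ^ (1 - α) := by
  have hsα : 0 < s + α := by linarith
  have hkey := Real.convexOn_log_Gamma.2 (Set.mem_Ioi.mpr hsα)
      (Set.mem_Ioi.mpr (by linarith : (0:ℝ) < s + α + 1)) hα0.le (by linarith : (0:ℝ) ≤ 1 - α)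
      (by ring)
  have hcomb : α • (s + α) + (1 - α) • (s + α + 1) = s + 1 := by
    simp [smul_eq_mul]; ring
  rw [hcomb] at hkey
  simp only [Function.comp_apply, smul_eq_mul] at hkey
  have h1 : Real.Gamma (s + α + 1) = (s + α) * Real.Gamma (s + α) :=
    Real.Gamma_add_one hsα.ne'
  have hG1 : 0 < Real.Gamma (s + 1) := Real.Gamma_pos_of_pos (by linarith)
  have hG2 : 0 < Real.Gamma (s + α) := Real.Gamma_pos_of_pos hsα
  rw [h1, Real.log_mul hsα.ne' hG2.ne'] at hkey
  have : Real.log (Real.Gamma (s + 1)) ≤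
      Real.log (Real.Gamma (s + α)) + (1 - α) * Real.log (s + α) := by nlinarith [hkey]
  calc Real.Gamma (s + 1) = Real.exp (Real.log (Real.Gamma (s + 1))) := (Real.exp_log hG1).symm
    _ ≤ Real.exp (Real.log (Real.Gamma (s + α)) + (1 - α) * Real.log (s + α)) :=
        Real.exp_le_exp.mpr this
    _ = Real.Gamma (s + α) * (s + α) ^ (1 - α) := by
        rw [Real.exp_add, Real.exp_log hG2, Real.rpow_def_of_pos hsα]; ring_nf

lemma summable_ML {α : ℝ} (hα0 : 0 < α) (hα1 : α < 1) (y : ℝ) :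
    Summable (fun k : ℕ => y ^ k / Real.Gamma (α * k + 1)) := by
  have hGpos : ∀ k : ℕ, 0 < Real.Gamma (α * k + 1) := fun k =>
    Real.Gamma_pos_of_pos (by positivity)
  set C := |y| with hC
  have hC0 : 0 ≤ C := abs_nonneg y
  -- eventual bound
  have htend : Tendsto (fun k : ℕ => (α * k + 1) ^ α) atTop atTop := by
    refine (tendsto_rpow_atTop hα0).comp ?_
    exact tendsto_atTop_add_const_right _ 1 ((tendsto_natCast_atTop_atTop).const_mul_atTop hα0)
  have hev : ∀ᶠ k : ℕ in atTop, 4 * C ≤ (α * k + 1) ^ α := htend.eventually_ge_atTop (4 * C)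
  refine Summable.of_norm_bounded (g := fun k => C ^ k / Real.Gamma (α * k + 1)) ?_ ?_
  · apply summable_of_ratio_norm_eventually_le (r := 1/2) (by norm_num)
    filter_upwards [hev] with k hk
    have hs : (0:ℝ) < α * k + 1 := by positivity
    have hGs : 0 < Real.Gamma (α * k + 1) := hGpos k
    have hnext : Real.Gamma (α * (k+1) + 1) = Real.Gamma ((α * k + 1) + α) := by ring_nf
    have hGnext : 0 < Real.Gamma ((α * k + 1) + α) := Real.Gamma_pos_of_pos (by positivity)
    -- lower bound on Gamma ratio
    have hL : (α * k + 1) * Real.Gamma (α * k + 1) ≤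
        Real.Gamma ((α * k + 1) + α) * ((α * k + 1) + α) ^ (1 - α) := by
      have := Gamma_add_one_le_aux hα0 hα1 hs
      have h2 : Real.Gamma ((α * k + 1) + 1) = (α * k + 1) * Real.Gamma (α * k + 1) :=
        Real.Gamma_add_one hs.ne'
      linarith [this, h2.symm.le, h2.le]
    -- (s+α)^(1-α) ≤ 2 * s^(1-α) ≤ 2 * s / s^α
    have hsum_le : (α * k + 1) + α ≤ 2 * (α * k + 1) := by
      have : α ≤ α * k + 1 := by nlinarith [Nat.cast_nonneg (α := ℝ) k]
      linarith
    have hpow1 : ((α * k + 1) + α) ^ (1 - α) ≤ (2 * (α * k + 1)) ^ (1 - α) :=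
      Real.rpow_le_rpow (by positivity) hsum_le (by linarith)
    have hpow2 : (2 * (α * k + 1)) ^ (1 - α) ≤ 2 * (α * k + 1) ^ (1 - α) := by
      rw [Real.mul_rpow (by norm_num) hs.le]
      have : (2:ℝ) ^ (1 - α) ≤ 2 := by
        calc (2:ℝ) ^ (1 - α) ≤ (2:ℝ) ^ (1:ℝ) :=
          Real.rpow_le_rpow_of_exponent_le (by norm_num) (by linarith)
        _ = 2 := Real.rpow_one 2
      nlinarith [Real.rpow_nonneg (le_of_lt hs) (1 - α)]
    have hsplit : (α * k + 1) ^ (1 - α) * (α * k + 1) ^ α = α * k + 1 := by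
      rw [← Real.rpow_add hs]; simp
    -- goal: ‖C^(k+1)/Γ(α(k+1)+1)‖ ≤ 1/2 * ‖C^k/Γ(αk+1)‖
    rw [norm_div, norm_div, norm_pow, norm_pow]
    rw [Real.norm_of_nonneg hC0, Real.norm_of_nonneg (hGpos (k+1)).le,
      Real.norm_of_nonneg hGs.le]
    push_cast
    rw [hnext, ← mul_div_assoc, div_le_div_iff₀ hGnext hGs]
    have key : C * ((α * k + 1) + α) ^ (1 - α) ≤ (1/2) * (α * k + 1) := by
      have h4 : ((α * k + 1) + α) ^ (1 - α) ≤ 2 * (α * k + 1) ^ (1 - α) := hpow1.trans hpow2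
      have h5 : C * ((α * k + 1) + α) ^ (1 - α) ≤ C * (2 * (α * k + 1) ^ (1 - α)) := by
        apply mul_le_mul_of_nonneg_left h4 hC0
      have h6 : 4 * C * (α * k + 1) ^ (1 - α) ≤ (α * k + 1) ^ α * (α * k + 1) ^ (1 - α) := by
        apply mul_le_mul_of_nonneg_right hk (Real.rpow_nonneg hs.le _)
      rw [mul_comm ((α * k + 1) ^ α) _, hsplit.symm] at h6
      nlinarith [Real.rpow_nonneg hs.le (1 - α)]
    calc C ^ (k+1) * Real.Gamma (α * ↑k + 1)
        = C * C ^ k * Real.Gamma (α * ↑k + 1) := by ring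
      _ ≤ 1/2 * C ^ k * Real.Gamma (α * ↑k + 1 + α) := by
          have hA := mul_le_mul_of_nonneg_left hL hC0
          have hB := mul_le_mul_of_nonneg_left key hGnext.le
          have hC2 : (α * ↑k + 1) * (C * Real.Gamma (α * ↑k + 1)) ≤
              (α * ↑k + 1) * (1/2 * Real.Gamma (α * ↑k + 1 + α)) := by nlinarith
          have h7 := le_of_mul_le_mul_left hC2 hs
          nlinarith [mul_le_mul_of_nonneg_right h7 (pow_nonneg hC0 k)]
  · intro k
    rw [norm_div, norm_pow, Real.norm_of_nonneg (hGpos k).le]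
    simp [hC, Real.norm_eq_abs]

noncomputable def MLw (α t : ℝ) : ℝ := ∑' k : ℕ, (-1) ^ k * t ^ (α * k) / Real.Gamma (α * k + 1)

section
variable {α : ℝ} (hα0 : 0 < α) (hα1 : α < 1)

include hα0 hα1

lemma summable_MLw_terms (t : ℝ) :
    Summable (fun k : ℕ => (-1) ^ k * t ^ (α * k) / Real.Gamma (α * k + 1)) := by
  have hGpos : ∀ k : ℕ, 0 < Real.Gamma (α * k + 1) := fun k =>
    Real.Gamma_pos_of_pos (by positivity)
  refine Summable.of_norm_bounded (g := fun k => (|t| ^ α) ^ k / Real.Gamma (α * k + 1))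
    (summable_ML hα0 hα1 _) ?_
  intro k
  rw [norm_div, norm_mul, norm_pow, norm_neg, norm_one, one_pow, one_mul,
    Real.norm_of_nonneg (hGpos k).le]
  rw [div_le_div_iff_of_pos_right (hGpos k)]
  calc ‖t ^ (α * (k:ℝ))‖ = |t ^ (α * (k:ℝ))| := rfl
      _ ≤ |t| ^ (α * (k:ℝ)) := Real.abs_rpow_le_abs_rpow t _
      _ = (|t| ^ α) ^ k := by
          rw [← Real.rpow_natCast (|t| ^ α) k, ← Real.rpow_mul (abs_nonneg t)]

lemma MLw_zero : MLw α 0 = 1 := by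
  rw [MLw, tsum_eq_single 0]
  · simp [Real.Gamma_one]
  · intro k hk
    have : α * (k:ℝ) ≠ 0 := by
      have : (1:ℝ) ≤ (k:ℝ) := by exact_mod_cast Nat.one_le_iff_ne_zero.mpr hk
      positivity
    rw [Real.zero_rpow this]
    simp

lemma MLw_continuous : Continuous (MLw α) := by
  rw [continuous_iff_continuousAt]
  intro x
  have hR : |x| < |x| + 1 := by linarith [abs_nonneg x]
  refine ContinuousOn.continuousAt (s := Set.Icc (-(|x|+1)) (|x|+1)) ?_ ?_
  · refine continuousOn_tsum (fun k => Continuous.continuousOn ?_)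
      (summable_ML hα0 hα1 ((|x|+1) ^ α)) ?_
    · exact ((continuous_const).mul (Real.continuous_rpow_const (by positivity))).div_const _
    · intro k t ht
      have hGpos : 0 < Real.Gamma (α * k + 1) := Real.Gamma_pos_of_pos (by positivity)
      rw [norm_div, norm_mul, norm_pow, norm_neg, norm_one, one_pow, one_mul,
        Real.norm_of_nonneg hGpos.le]
      have habs : |t| ≤ |x| + 1 := by
        rw [abs_le]; exact ⟨ht.1, ht.2⟩
      rw [div_le_div_iff_of_pos_right hGpos]
      calc ‖t ^ (α * (k:ℝ))‖ ≤ |t| ^ (α * (k:ℝ)) := Real.abs_rpow_le_abs_rpow t _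
        _ ≤ (|x|+1) ^ (α * (k:ℝ)) :=
            Real.rpow_le_rpow (abs_nonneg t) habs (by positivity)
        _ = ((|x|+1) ^ α) ^ k := by
            rw [← Real.rpow_natCast ((|x|+1) ^ α) k, ← Real.rpow_mul (by positivity)]
  · exact Icc_mem_nhds (by cases abs_cases x <;> linarith) (by cases abs_cases x <;> linarith)

lemma ML_eq_MLw {x : ℝ} (hx : 0 ≤ x) :
    (∑' k : ℕ, (-x) ^ k / Real.Gamma (α * k + 1)) = MLw α (x ^ (1/α)) := by
  rw [MLw]
  refine tsum_congr fun k => ?_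
  have h1 : (x ^ (1/α)) ^ (α * (k:ℝ)) = x ^ (k:ℕ) := by
    rw [← Real.rpow_mul hx, ← mul_assoc, one_div, inv_mul_cancel₀ hα0.ne', one_mul,
      Real.rpow_natCast]
  rw [h1, neg_pow]
end

-- real Beta evaluation
lemma real_beta_eval {a b t : ℝ} (ha : 0 < a) (hb : 0 < b) (ht : 0 < t) :
    ∫ s in (0:ℝ)..t, s ^ (b - 1) * (t - s) ^ (a - 1) =
      Real.Gamma a * Real.Gamma b / Real.Gamma (a + b) * t ^ (a + b - 1) := by
  have hGab : 0 < Real.Gamma (a + b) := Real.Gamma_pos_of_pos (by linarith)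
  have hbeta := Complex.betaIntegral_scaled (b : ℂ) (a : ℂ) ht
  have hGG := Complex.Gamma_mul_Gamma_eq_betaIntegral
    (by simpa using hb : 0 < (b:ℂ).re) (by simpa using ha : 0 < (a:ℂ).re)
  -- identify the complex integral with the real one
  have hint : ∫ x in (0:ℝ)..t, (x : ℂ) ^ ((b:ℂ) - 1) * ((t : ℂ) - x) ^ ((a:ℂ) - 1) =
      ((∫ s in (0:ℝ)..t, s ^ (b - 1) * (t - s) ^ (a - 1) : ℝ) : ℂ) := by
    rw [← intervalIntegral.integral_ofReal]
    refine intervalIntegral.integral_congr fun x hx => ?_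
    rw [Set.uIcc_of_le ht.le] at hx
    push_cast
    rw [Complex.ofReal_cpow hx.1 (b - 1),
      Complex.ofReal_cpow (by linarith [hx.2] : (0:ℝ) ≤ t - x) (a - 1)]
    push_cast
    ring
  rw [hint] at hbeta
  have hbeta_val : Complex.betaIntegral (b:ℂ) (a:ℂ) =
      ((Real.Gamma a * Real.Gamma b / Real.Gamma (a + b) : ℝ) : ℂ) := by
    have h1 : ((b:ℂ) + (a:ℂ)) = (((a + b : ℝ)) : ℂ) := by push_cast; ring
    rw [h1] at hGG
    rw [Complex.Gamma_ofReal, Complex.Gamma_ofReal, Complex.Gamma_ofReal] at hGG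
    have h2 : ((Real.Gamma (a + b) : ℝ) : ℂ) ≠ 0 := by
      simpa using hGab.ne'
    rw [Complex.ofReal_div, Complex.ofReal_mul, eq_div_iff h2]
    linear_combination -hGG
  rw [hbeta_val] at hbeta
  have hpow : ((t:ℂ)) ^ ((b:ℂ) + (a:ℂ) - 1) = ((t ^ (a + b - 1) : ℝ) : ℂ) := by
    rw [Complex.ofReal_cpow ht.le]
    push_cast
    ring_nf
  rw [hpow] at hbeta
  have hfin : ((∫ s in (0:ℝ)..t, s ^ (b - 1) * (t - s) ^ (a - 1) : ℝ) : ℂ) =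
      ((Real.Gamma a * Real.Gamma b / Real.Gamma (a + b) * t ^ (a + b - 1) : ℝ) : ℂ) := by
    rw [hbeta]; push_cast; ring
  exact_mod_cast hfin

section
variable {α : ℝ} (hα0 : 0 < α) (hα1 : α < 1)

include hα0 hα1

-- integrability of each term over Ioc 0 t
lemma term_intervalIntegrable {t : ℝ} (ht : 0 < t) (c : ℝ) (hc : 0 ≤ c) :
    IntervalIntegrable (fun s => s ^ c * (t - s) ^ (α - 1)) volume 0 t := by
  have h1 : IntervalIntegrable (fun s : ℝ => s ^ (α - 1)) volume 0 t :=
    intervalIntegral.intervalIntegrable_rpow' (by linarith)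
  have h2 : IntervalIntegrable (fun s : ℝ => (t - s) ^ (α - 1)) volume 0 t := by
    have := (h1.comp_sub_left t)
    simpa using this.symm
  exact h2.continuousOn_mul (Real.continuous_rpow_const hc).continuousOn

-- value of each term integral
lemma term_integral {t : ℝ} (ht : 0 < t) (k : ℕ) :
    ∫ s in (0:ℝ)..t, s ^ (α * k) * (t - s) ^ (α - 1) =
      Real.Gamma α * Real.Gamma (α * k + 1) / Real.Gamma (α * (k + 1) + 1) * t ^ (α * (k + 1)) := by
  have h := real_beta_eval (a := α) (b := α * k + 1) (t := t) hα0 (by positivity) ht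
  have e1 : α * (k:ℝ) + 1 - 1 = α * k := by ring
  have e2 : α + (α * k + 1) = α * (k + 1) + 1 := by ring
  have e3 : α + (α * k + 1) - 1 = α * (k + 1) := by ring
  rw [e1, e2] at h
  rw [h]
  norm_num
end

section
variable {α : ℝ} (hα0 : 0 < α) (hα1 : α < 1)

include hα0 hα1

lemma volterra {t : ℝ} (ht : 0 < t) :
    ∫ s in (0:ℝ)..t, (t - s) ^ (α - 1) * MLw α s = Real.Gamma α * (1 - MLw α t) := by
  have hGpos : ∀ k : ℕ, 0 < Real.Gamma (α * k + 1) := fun k =>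
    Real.Gamma_pos_of_pos (by positivity)
  have hGα : 0 < Real.Gamma α := Real.Gamma_pos_of_pos hα0
  set F : ℕ → ℝ → ℝ :=
    fun k s => ((-1) ^ k / Real.Gamma (α * k + 1)) * (s ^ (α * k) * (t - s) ^ (α - 1)) with hF
  have htpow : ∀ k : ℕ, t ^ (α * ((k:ℝ) + 1)) = (t ^ α) ^ (k + 1) := by
    intro k
    rw [← Real.rpow_natCast (t ^ α) (k + 1), ← Real.rpow_mul ht.le]
    push_cast
    ring_nf
  -- integrability of each term
  have hint : ∀ k : ℕ, Integrable (F k) (volume.restrict (Set.Ioc 0 t)) := by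
    intro k
    have h := (term_intervalIntegrable hα0 hα1 ht (α * k) (by positivity)).const_mul
      ((-1) ^ k / Real.Gamma (α * k + 1))
    rw [intervalIntegrable_iff, Set.uIoc_of_le ht.le] at h
    exact h
  -- norm integrals
  have hnorm : ∀ k : ℕ, (∫ s in Set.Ioc (0:ℝ) t, ‖F k s‖) =
      Real.Gamma α * (t ^ α) ^ (k + 1) / Real.Gamma (α * (k + 1) + 1) := by
    intro k
    have heq : ∀ s ∈ Set.Ioc (0:ℝ) t, ‖F k s‖ =
        (1 / Real.Gamma (α * k + 1)) * (s ^ (α * k) * (t - s) ^ (α - 1)) := by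
      intro s hs
      have h1 : (0:ℝ) ≤ s ^ (α * k) := Real.rpow_nonneg hs.1.le _
      have h2 : (0:ℝ) ≤ (t - s) ^ (α - 1) := Real.rpow_nonneg (by linarith [hs.2]) _
      rw [norm_mul, norm_div, norm_pow, norm_neg, norm_one, one_pow,
        Real.norm_of_nonneg (hGpos k).le, Real.norm_of_nonneg (mul_nonneg h1 h2)]
    rw [setIntegral_congr_fun measurableSet_Ioc heq]
    rw [MeasureTheory.integral_const_mul]
    have hIoc : (∫ s in Set.Ioc (0:ℝ) t, s ^ (α * k) * (t - s) ^ (α - 1)) =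
        ∫ s in (0:ℝ)..t, s ^ (α * k) * (t - s) ^ (α - 1) :=
      (intervalIntegral.integral_of_le ht.le).symm
    rw [hIoc, term_integral hα0 hα1 ht k, htpow k]
    field_simp
  -- summability of norm integrals
  have hsum : Summable (fun k : ℕ => ∫ s in Set.Ioc (0:ℝ) t, ‖F k s‖) := by
    have hbase : Summable (fun j : ℕ => Real.Gamma α * ((t ^ α) ^ j / Real.Gamma (α * j + 1))) :=
      (summable_ML hα0 hα1 (t ^ α)).mul_left _
    have hshift : Summable (fun k : ℕ =>
        Real.Gamma α * ((t ^ α) ^ (k + 1) / Real.Gamma (α * (k + 1) + 1))) := by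
      have := (summable_nat_add_iff (f := fun j : ℕ =>
        Real.Gamma α * ((t ^ α) ^ j / Real.Gamma (α * j + 1))) 1).mpr hbase
      refine this.congr fun k => ?_
      push_cast
      ring_nf
    apply hshift.congr
    intro k
    rw [hnorm k]
    push_cast
    ring
  -- the swap
  have hswap := MeasureTheory.integral_tsum_of_summable_integral_norm hint hsum
  -- identify the inner tsum
  have hinner : ∀ s : ℝ, (∑' k : ℕ, F k s) = (t - s) ^ (α - 1) * MLw α s := by
    intro s
    rw [MLw, ← tsum_mul_left]
    refine tsum_congr fun k => ?_
    rw [hF]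
    ring
  -- value of each integral
  have hval : ∀ k : ℕ, (∫ s in Set.Ioc (0:ℝ) t, F k s) =
      (-1) ^ k * (Real.Gamma α * (t ^ α) ^ (k + 1) / Real.Gamma (α * (k + 1) + 1)) := by
    intro k
    have hIoc : (∫ s in Set.Ioc (0:ℝ) t, F k s) = ∫ s in (0:ℝ)..t, F k s :=
      (intervalIntegral.integral_of_le ht.le).symm
    rw [hIoc, hF]
    simp only []
    rw [intervalIntegral.integral_const_mul, term_integral hα0 hα1 ht k, htpow k]
    field_simp
  -- final sum computation
  have hML : Summable (fun k : ℕ => (-1) ^ k * t ^ (α * k) / Real.Gamma (α * k + 1)) :=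
    summable_MLw_terms hα0 hα1 t
  have h0 : MLw α t = 1 + ∑' k : ℕ, (-1) ^ (k+1) * t ^ (α * ((k:ℝ)+1)) / Real.Gamma (α * ((k:ℝ)+1) + 1) := by
    rw [MLw, Summable.tsum_eq_zero_add hML]
    congr 1
    · norm_num [Real.Gamma_one]
    · refine tsum_congr fun k => ?_
      push_cast
      ring_nf
  have hfinal : (∑' k : ℕ, ∫ s in Set.Ioc (0:ℝ) t, F k s) = Real.Gamma α * (1 - MLw α t) := by
    have hsum2 : Summable (fun k : ℕ =>
        (-1) ^ (k+1) * t ^ (α * ((k:ℝ)+1)) / Real.Gamma (α * ((k:ℝ)+1) + 1)) := by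
      have := (summable_nat_add_iff (f := fun j : ℕ =>
        (-1) ^ j * t ^ (α * (j:ℝ)) / Real.Gamma (α * (j:ℝ) + 1)) 1).mpr hML
      apply this.congr
      intro k
      push_cast
      ring_nf
    have hts : ∑' k : ℕ, (-1) ^ (k+1) * t ^ (α * ((k:ℝ)+1)) / Real.Gamma (α * ((k:ℝ)+1) + 1)
        = MLw α t - 1 := by rw [h0]; ring
    calc (∑' k : ℕ, ∫ s in Set.Ioc (0:ℝ) t, F k s)
        = ∑' k : ℕ, (-Real.Gamma α) *
            ((-1) ^ (k+1) * t ^ (α * ((k:ℝ)+1)) / Real.Gamma (α * ((k:ℝ)+1) + 1)) := by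
          refine tsum_congr fun k => ?_
          rw [hval k, ← htpow k]
          push_cast
          ring
      _ = (-Real.Gamma α) * (MLw α t - 1) := by rw [tsum_mul_left, hts]
      _ = Real.Gamma α * (1 - MLw α t) := by ring
  rw [intervalIntegral.integral_of_le ht.le, ← hfinal, hswap]
  apply setIntegral_congr_fun measurableSet_Ioc
  intro s _
  exact (hinner s).symm

end

section
variable {α : ℝ} (hα0 : 0 < α) (hα1 : α < 1)

include hα0 hα1

lemma MLw_intable {t : ℝ} (ht : 0 < t) :
    IntervalIntegrable (fun s => (t - s) ^ (α - 1) * MLw α s) volume 0 t := by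
  have h1 : IntervalIntegrable (fun s : ℝ => s ^ (α - 1)) volume 0 t :=
    intervalIntegral.intervalIntegrable_rpow' (by linarith)
  have h2 : IntervalIntegrable (fun s : ℝ => (t - s) ^ (α - 1)) volume 0 t := by
    simpa using (h1.comp_sub_left t).symm
  exact h2.mul_continuousOn (MLw_continuous hα0 hα1).continuousOn

lemma MLw_pos {t : ℝ} (ht : 0 ≤ t) : 0 < MLw α t := by
  by_contra hcon
  push_neg at hcon
  -- the set of bad points
  set S : Set ℝ := {s | 0 ≤ s ∧ MLw α s ≤ 0} with hS
  have hSne : S.Nonempty := ⟨t, ht, hcon⟩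
  have hSbdd : BddBelow S := ⟨0, fun s hs => hs.1⟩
  have hSclosed : IsClosed S := by
    have : S = Ici 0 ∩ (MLw α) ⁻¹' (Iic 0) := by
      ext s; exact ⟨fun h => ⟨h.1, h.2⟩, fun h => ⟨h.1, h.2⟩⟩
    rw [this]
    exact isClosed_Ici.inter (IsClosed.preimage (MLw_continuous hα0 hα1) isClosed_Iic)
  set t₀ : ℝ := sInf S with ht₀
  have ht₀S : t₀ ∈ S := hSclosed.csInf_mem hSne hSbdd
  have ht₀nonneg : 0 ≤ t₀ := ht₀S.1
  have ht₀pos : 0 < t₀ := by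
    rcases eq_or_lt_of_le ht₀nonneg with h | h
    · exfalso
      have h0 : MLw α t₀ ≤ 0 := ht₀S.2
      rw [← h, MLw_zero hα0 hα1] at h0
      linarith
    · exact h
  have hpos_before : ∀ s, 0 ≤ s → s < t₀ → 0 < MLw α s := by
    intro s hs0 hst
    by_contra hns
    push_neg at hns
    exact absurd (csInf_le hSbdd ⟨hs0, hns⟩) (not_le.mpr hst)
  -- MLw α t₀ = 0
  have ht₀zero : MLw α t₀ = 0 := by
    refine le_antisymm ht₀S.2 ?_
    have htd : Tendsto (MLw α) (nhdsWithin t₀ (Iio t₀)) (nhds (MLw α t₀)) :=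
      ((MLw_continuous hα0 hα1).continuousAt).tendsto.mono_left nhdsWithin_le_nhds
    refine ge_of_tendsto htd ?_
    filter_upwards [Ioo_mem_nhdsLT_of_mem (by constructor <;> linarith [ht₀pos] :
      t₀ ∈ Ioc (0:ℝ) t₀)] with s hs
    exact (hpos_before s hs.1.le hs.2).le
  -- the max over [t₀ - δ, t₀]
  have hΓα : 0 < Real.Gamma α := Real.Gamma_pos_of_pos hα0
  set δ : ℝ := min (t₀ / 2) ((α * Real.Gamma α / 2) ^ (1/α)) with hδ
  have hδpos : 0 < δ := by
    apply lt_min (by linarith)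
    positivity
  have hδle : δ ≤ t₀ / 2 := min_le_left _ _
  have hδpow : δ ^ α ≤ α * Real.Gamma α / 2 := by
    calc δ ^ α ≤ ((α * Real.Gamma α / 2) ^ (1/α)) ^ α :=
        Real.rpow_le_rpow hδpos.le (min_le_right _ _) hα0.le
      _ = α * Real.Gamma α / 2 := by
        rw [← Real.rpow_mul (by positivity), one_div, inv_mul_cancel₀ hα0.ne', Real.rpow_one]
  obtain ⟨s₀, hs₀mem, hs₀max⟩ :=
    (isCompact_Icc (a := t₀ - δ) (b := t₀)).exists_isMaxOn
      (nonempty_Icc.mpr (by linarith)) ((MLw_continuous hα0 hα1).continuousOn)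
  set M : ℝ := MLw α s₀ with hM
  have hMmax : ∀ s ∈ Icc (t₀ - δ) t₀, MLw α s ≤ M := hs₀max
  have hM0 : 0 ≤ M := by
    have := hMmax t₀ (by constructor <;> linarith)
    rw [ht₀zero] at this
    linarith
  -- key inequality: for 0 < h ≤ δ, MLw α (t₀ - h) ≤ M / 2
  have hkey : ∀ h : ℝ, 0 < h → h ≤ δ → MLw α (t₀ - h) ≤ M / 2 := by
    intro h hh0 hhδ
    have hth : 0 < t₀ - h := by
      have := hδle
      linarith [hδle, hhδ]
    -- integrability pieces
    have hI_t₀ : IntervalIntegrable (fun s => (t₀ - s) ^ (α - 1) * MLw α s) volume 0 t₀ :=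
      MLw_intable hα0 hα1 ht₀pos
    have hI_a : IntervalIntegrable (fun s => (t₀ - s) ^ (α - 1) * MLw α s) volume 0 (t₀ - h) :=
      hI_t₀.mono_set (by rw [uIcc_of_le hth.le, uIcc_of_le ht₀pos.le]; exact Icc_subset_Icc (le_refl _) (by linarith))
    have hI_b : IntervalIntegrable (fun s => (t₀ - s) ^ (α - 1) * MLw α s) volume (t₀ - h) t₀ :=
      hI_t₀.mono_set (by rw [uIcc_of_le (by linarith : t₀ - h ≤ t₀), uIcc_of_le ht₀pos.le]; exact Icc_subset_Icc (by linarith) (le_refl _))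
    have hI_c : IntervalIntegrable (fun s => (t₀ - h - s) ^ (α - 1) * MLw α s) volume 0 (t₀ - h) :=
      MLw_intable hα0 hα1 hth
    -- split g(t₀)
    have hsplit : (∫ s in (0:ℝ)..t₀, (t₀ - s) ^ (α - 1) * MLw α s) =
        (∫ s in (0:ℝ)..(t₀ - h), (t₀ - s) ^ (α - 1) * MLw α s) +
        ∫ s in (t₀ - h)..t₀, (t₀ - s) ^ (α - 1) * MLw α s :=
      (intervalIntegral.integral_add_adjacent_intervals hI_a hI_b).symm
    -- A ≤ 0 part : monotonicity in the kernel
    have hA : (∫ s in (0:ℝ)..(t₀ - h), (t₀ - s) ^ (α - 1) * MLw α s) ≤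
        ∫ s in (0:ℝ)..(t₀ - h), (t₀ - h - s) ^ (α - 1) * MLw α s := by
      refine intervalIntegral.integral_mono_ae_restrict hth.le hI_a hI_c ?_
      have hne : ∀ᵐ s : ℝ ∂(volume.restrict (Icc 0 (t₀ - h))), s ≠ t₀ - h := by
        refine ae_restrict_of_ae ?_
        rw [MeasureTheory.ae_iff]
        simp only [ne_eq, not_not, Set.setOf_eq_eq_singleton]
        exact measure_singleton _
      filter_upwards [hne, ae_restrict_mem measurableSet_Icc] with s hsne hsmem
      have hs1 : s < t₀ - h := lt_of_le_of_ne hsmem.2 hsne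
      have h1 : (0:ℝ) < t₀ - h - s := by linarith
      have h2 : (t₀ - s) ^ (α - 1) ≤ (t₀ - h - s) ^ (α - 1) :=
        Real.rpow_le_rpow_of_nonpos h1 (by linarith) (by linarith)
      have h3 : 0 < MLw α s := hpos_before s hsmem.1 (by linarith)
      exact mul_le_mul_of_nonneg_right h2 h3.le
    -- B ≤ M * h^α / α part
    have hB : (∫ s in (t₀ - h)..t₀, (t₀ - s) ^ (α - 1) * MLw α s) ≤ M * (h ^ α / α) := by
      have hmono : (∫ s in (t₀ - h)..t₀, (t₀ - s) ^ (α - 1) * MLw α s) ≤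
          ∫ s in (t₀ - h)..t₀, M * (t₀ - s) ^ (α - 1) := by
        refine intervalIntegral.integral_mono_on (by linarith) hI_b ?_ ?_
        · have j : IntervalIntegrable (fun x : ℝ => x ^ (α - 1)) volume 0 h :=
            intervalIntegral.intervalIntegrable_rpow' (by linarith)
          have h3 : IntervalIntegrable (fun s : ℝ => (t₀ - s) ^ (α - 1)) volume (t₀ - h) t₀ := by
            have := (j.comp_sub_left t₀).symm
            simpa using this
          exact h3.const_mul M
        · intro s hs
          have h1 : 0 ≤ (t₀ - s) ^ (α - 1) := Real.rpow_nonneg (by linarith [hs.2]) _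
          have h2 : MLw α s ≤ M := hMmax s ⟨by linarith [hs.1], hs.2⟩
          calc (t₀ - s) ^ (α - 1) * MLw α s ≤ (t₀ - s) ^ (α - 1) * M :=
              mul_le_mul_of_nonneg_left h2 h1
            _ = M * (t₀ - s) ^ (α - 1) := by ring
      have hval : (∫ s in (t₀ - h)..t₀, M * (t₀ - s) ^ (α - 1)) = M * (h ^ α / α) := by
        rw [intervalIntegral.integral_const_mul]
        congr 1
        have := intervalIntegral.integral_comp_sub_left (a := t₀ - h) (b := t₀)
          (fun x : ℝ => x ^ (α - 1)) t₀
        rw [this]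
        simp only [sub_self, sub_sub_cancel]
        rw [integral_rpow (Or.inl (by linarith))]
        rw [Real.zero_rpow (by linarith : α - 1 + 1 ≠ 0)]
        rw [sub_add_cancel]
        ring
      linarith [hmono, hval.le, hval.ge]
    -- put together via the Volterra equation
    have hVa := volterra hα0 hα1 ht₀pos
    have hVb := volterra hα0 hα1 hth
    -- Γα (1 - MLw t₀) - Γα (1 - MLw (t₀-h)) ≤ M h^α/α
    have hcomb : Real.Gamma α * (1 - MLw α t₀) - Real.Gamma α * (1 - MLw α (t₀ - h)) ≤
        M * (h ^ α / α) := by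
      rw [← hVa, ← hVb, hsplit]
      linarith [hA, hB]
    rw [ht₀zero] at hcomb
    have hha : h ^ α ≤ α * Real.Gamma α / 2 := by
      calc h ^ α ≤ δ ^ α := Real.rpow_le_rpow hh0.le hhδ hα0.le
        _ ≤ α * Real.Gamma α / 2 := hδpow
    have hMh : M * (h ^ α / α) ≤ M * (Real.Gamma α / 2) := by
      apply mul_le_mul_of_nonneg_left ?_ hM0
      rw [div_le_iff₀ hα0] at *
      nlinarith [hha]
    nlinarith [hcomb, hMh, hΓα]
  -- now derive the contradiction
  rcases eq_or_lt_of_le hs₀mem.2 with hs₀eq | hs₀lt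
  · -- s₀ = t₀ : M = 0, contradicts MLw (t₀ - δ) > 0
    have hMzero : M = 0 := by rw [hM, hs₀eq, ht₀zero]
    have h1 : 0 < MLw α (t₀ - δ) := hpos_before _ (by linarith) (by linarith)
    have h2 := hMmax (t₀ - δ) ⟨le_refl _, by linarith⟩
    rw [hMzero] at h2
    linarith
  · -- s₀ < t₀ : M ≤ M/2, contradicts M ≥ MLw (t₀ - δ) > 0
    have hh0 : 0 < t₀ - s₀ := by linarith
    have hhδ : t₀ - s₀ ≤ δ := by linarith [hs₀mem.1]
    have := hkey (t₀ - s₀) hh0 hhδ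
    have hs₀eq : t₀ - (t₀ - s₀) = s₀ := by ring
    rw [hs₀eq] at this
    have h1 : 0 < MLw α (t₀ - δ) := hpos_before _ (by linarith) (by linarith)
    have h2 := hMmax (t₀ - δ) ⟨le_refl _, by linarith⟩
    linarith [this, h1, h2]

lemma MLw_le_one {t : ℝ} (ht : 0 ≤ t) : MLw α t ≤ 1 := by
  rcases eq_or_lt_of_le ht with h | h
  · rw [← h, MLw_zero hα0 hα1]
  · have hV := volterra hα0 hα1 h
    have hnn : 0 ≤ ∫ s in (0:ℝ)..t, (t - s) ^ (α - 1) * MLw α s := by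
      refine intervalIntegral.integral_nonneg h.le fun s hs => ?_
      exact mul_nonneg (Real.rpow_nonneg (by linarith [hs.2]) _)
        (MLw_pos hα0 hα1 hs.1).le
    have hΓα : 0 < Real.Gamma α := Real.Gamma_pos_of_pos hα0
    nlinarith [hV, hnn]
end


lemma ML_pos_le_one {α : ℝ} (hα0 : 0 < α) (hα1 : α < 1) {x : ℝ} (hx : 0 ≤ x) :
    0 < mittagLefflerReal α 1 (-x) ∧ mittagLefflerReal α 1 (-x) ≤ 1 := by
  have hx' : (0:ℝ) ≤ x ^ (1/α) := Real.rpow_nonneg hx _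
  have hunfold : mittagLefflerReal α 1 (-x) = MLw α (x ^ (1/α)) := by
    rw [mittagLefflerReal]
    exact ML_eq_MLw hα0 hα1 hx
  rw [hunfold]
  exact ⟨MLw_pos hα0 hα1 hx', MLw_le_one hα0 hα1 hx'⟩

/-- Uniqueness of the initial value: if the final-time values
`∑ₖ ⟨g_j, φ_k⟩ E_{α,1}(−λ_k Tᵅ) φ_k` coincide for `j = 1, 2`, then `g₁ = g₂`. -/
theorem initial_value_uniqueness
    {H : Type*} [NormedAddCommGroup H] [InnerProductSpace ℝ H] [CompleteSpace H]
    (φ : HilbertBasis ℕ ℝ H) (T α : ℝ) (hT : 0 < T) (hα0 : 0 < α) (hα1 : α < 1)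
    (lam : ℕ → ℝ) (hpos : ∀ k, 0 < lam k) (g₁ g₂ : H)
    (heq : ∑' k : ℕ, (⟪g₁, φ k⟫ * mittagLefflerReal α 1 (-(lam k * T ^ α))) • φ k =
           ∑' k : ℕ, (⟪g₂, φ k⟫ * mittagLefflerReal α 1 (-(lam k * T ^ α))) • φ k) :
    g₁ = g₂ := by
  set e : ℕ → ℝ := fun k => mittagLefflerReal α 1 (-(lam k * T ^ α)) with he
  have hex : ∀ k, 0 ≤ lam k * T ^ α := fun k =>
    mul_nonneg (hpos k).le (Real.rpow_nonneg hT.le α)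
  have hepos : ∀ k, 0 < e k := fun k => (ML_pos_le_one hα0 hα1 (hex k)).1
  have hele : ∀ k, e k ≤ 1 := fun k => (ML_pos_le_one hα0 hα1 (hex k)).2
  -- membership in ℓ²
  have hmem : ∀ g : H, Memℓp (fun k => ⟪g, φ k⟫ * e k) 2 := by
    intro g
    have hg : Memℓp (fun k => (φ.repr g) k) 2 := (φ.repr g).2
    rw [memℓp_gen_iff (by norm_num)] at hg ⊢
    apply Summable.of_nonneg_of_le (fun k => by positivity) ?_ hg
    intro k
    have h1 : ‖⟪g, φ k⟫ * e k‖ ≤ ‖⟪g, φ k⟫‖ := by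
      rw [norm_mul]
      calc ‖⟪g, φ k⟫‖ * ‖e k‖ ≤ ‖⟪g, φ k⟫‖ * 1 := by
            apply mul_le_mul_of_nonneg_left ?_ (norm_nonneg _)
            rw [Real.norm_of_nonneg (hepos k).le]
            exact hele k
        _ = ‖⟪g, φ k⟫‖ := mul_one _
    have h2 : (φ.repr g) k = ⟪φ k, g⟫ := φ.repr_apply_apply g k
    have h3 : ‖(φ.repr g) k‖ = ‖⟪g, φ k⟫‖ := by rw [h2, real_inner_comm]
    rw [h3]
    exact Real.rpow_le_rpow (norm_nonneg _) h1 (by positivity)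
  set v₁ : lp (fun _ : ℕ => ℝ) 2 := ⟨fun k => ⟪g₁, φ k⟫ * e k, hmem g₁⟩ with hv₁
  set v₂ : lp (fun _ : ℕ => ℝ) 2 := ⟨fun k => ⟪g₂, φ k⟫ * e k, hmem g₂⟩ with hv₂
  have hs₁ := φ.hasSum_repr_symm v₁
  have hs₂ := φ.hasSum_repr_symm v₂
  have ht₁ : ∑' k : ℕ, (⟪g₁, φ k⟫ * e k) • φ k = φ.repr.symm v₁ := hs₁.tsum_eq
  have ht₂ : ∑' k : ℕ, (⟪g₂, φ k⟫ * e k) • φ k = φ.repr.symm v₂ := hs₂.tsum_eq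
  rw [ht₁, ht₂] at heq
  have hv : v₁ = v₂ := φ.repr.symm.injective heq
  have hcoef : ∀ k, ⟪g₁, φ k⟫ * e k = ⟪g₂, φ k⟫ * e k := by
    intro k
    have := congrArg (fun v : lp (fun _ : ℕ => ℝ) 2 => (v : ℕ → ℝ) k) hv
    simpa [hv₁, hv₂] using this
  have hinner : ∀ k, ⟪g₁, φ k⟫ = ⟪g₂, φ k⟫ := fun k =>
    mul_right_cancel₀ (hepos k).ne' (hcoef k)
  apply φ.repr.injective
  apply lp.ext
  funext k
  rw [φ.repr_apply_apply, φ.repr_apply_apply, real_inner_comm, hinner k, real_inner_comm]
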